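/- Let K ≥ 1 and let the K data streams be mutually independent, the a-th stream consisting of independent observations each with a sub-ψ_{μ^a} distribution; write GL_n^a(μ1^a, μ0^a) for the GLR-like statistic based on the first n observations of stream a. Suppose that for each a ∈ [K] there are functions f^a : ℕ → [0,∞) and h^a : (0,1] → [0,∞) with h^a nonincreasing and h^a(α) → ∞ as α → 0, such that for every α ∈ (0,1], P( ∃ n ≥ 1 : log GL_n^a(μ1^a, μ0^a) ≥ f^a(n) + h^a(α) ) ≤ α. Then for every ε > 0, P( ∃ (n_1, …, n_K) ∈ ℕ^K : Σ_{a=1}^K log GL_{n_a}^a(μ1^a, μ0^a) ≥ Σ_{a=1}^K f^a(n_a) + ε ) ≤ P( Σ_{a=1}^K h^a(U_a) ≥ ε ), where U_1, …, U_K are independent Uniform[0,1] random variables. -/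

import Mathlib

open MeasureTheory ProbabilityTheory Real Set Filter
open scoped Classical ENNReal

noncomputable section

/-- A sub-`ψ_M` family of distributions: `M ⊆ ℝ` open convex; for each `μ ∈ M`, `ψ μ` is
finite and strictly convex on the common closed set `Λ` whose interior contains `0`,
differentiable on the interior of `Λ`, with `ψ μ 0 = 0` and `(ψ μ)' 0 = μ`; `ψs μ` is the
convex conjugate of `ψ μ`, finite and differentiable on `M` with derivative `ψs' μ`. -/
structure SubPsiFamily where
  M : Set ℝ
  Λ : Set ℝ
  ψ : ℝ → ℝ → ℝ
  ψs : ℝ → ℝ → ℝ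
  ψs' : ℝ → ℝ → ℝ
  M_open : IsOpen M
  M_convex : Convex ℝ M
  Λ_closed : IsClosed Λ
  zero_mem : (0 : ℝ) ∈ interior Λ
  ψ_strictConvexOn : ∀ μ ∈ M, StrictConvexOn ℝ Λ (ψ μ)
  ψ_diff : ∀ μ ∈ M, ∀ l ∈ interior Λ, DifferentiableAt ℝ (ψ μ) l
  ψ_zero : ∀ μ ∈ M, ψ μ 0 = 0
  ψ_deriv_zero : ∀ μ ∈ M, HasDerivAt (ψ μ) μ 0
  conj : ∀ μ ∈ M, ∀ x ∈ M, IsLUB ((fun l => l * x - ψ μ l) '' Λ) (ψs μ x)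
  ψs_deriv : ∀ μ ∈ M, ∀ x ∈ M, HasDerivAt (ψs μ) (ψs' μ x) x

namespace SubPsiFamily

variable (F : SubPsiFamily)

/-- Bregman divergence `D_{ψ*_μ}(z₁, z₂)`. -/
def D (μ z1 z2 : ℝ) : ℝ := F.ψs μ z1 - F.ψs μ z2 - F.ψs' μ z2 * (z1 - z2)

/-- The family has an order-preserving class of Bregman divergences. -/
def OrderPreserving : Prop :=
  ∀ z0 ∈ F.M, ∀ μ0 ∈ F.M, ∀ μ1 ∈ F.M,
    ((μ1 ≤ μ0 ∧ μ0 ≤ z0) ∨ (z0 ≤ μ0 ∧ μ0 ≤ μ1)) → F.D μ0 μ1 μ0 ≤ F.D z0 μ1 z0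

/-- LR-like statistic `L_n(μ₁, μ₀)` as a function of the sample mean `x̄`. -/
def LR (n : ℕ) (xbar μ1 μ0 : ℝ) : ℝ :=
  Real.exp (n * (F.ψs' μ0 μ1 * xbar - F.ψ μ0 (F.ψs' μ0 μ1)))

/-- `log GL_n(μ₁, μ₀) = log (max (sup_{z > μ1} L_n(z, μ0)) 1)`, as an extended real. -/
def logGL (n : ℕ) (xbar μ1 μ0 : ℝ) : EReal :=
  max (⨆ z : {z : ℝ // z ∈ F.M ∧ μ1 < z}, (Real.log (F.LR n xbar z μ0) : EReal)) 0

/-- A random variable `Y` has a sub-`ψ_μ` distribution under `P`. -/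
def SubPsi {Ω : Type*} [MeasurableSpace Ω] (P : Measure Ω) (μ : ℝ) (Y : Ω → ℝ) : Prop :=
  Measurable Y ∧ (∀ᵐ ω ∂P, Y ω ∈ closure F.M) ∧ (∫ ω, Y ω ∂P) = μ ∧
    ∀ l ∈ F.Λ, Real.log (∫ ω, Real.exp (l * Y ω) ∂P) ≤ F.ψ μ l

/-- A distribution `Q` on `ℝ` is sub-`ψ_μ`. -/
def SubPsiDist (Q : Measure ℝ) (μ : ℝ) : Prop :=
  (∀ᵐ x ∂Q, x ∈ closure F.M) ∧ (∫ x, x ∂Q) = μ ∧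
    ∀ l ∈ F.Λ, Real.log (∫ x, Real.exp (l * x) ∂Q) ≤ F.ψ μ l

end SubPsiFamily

/-- Sample mean `X̄_n` of the first `n` observations. -/
def sampleMean {Ω : Type*} (X : ℕ → Ω → ℝ) (n : ℕ) (ω : Ω) : ℝ :=
  (∑ i ∈ Finset.range n, X i ω) / n


section Helpers

lemma ereal_coe_sum {ι : Type*} (s : Finset ι) (g : ι → ℝ) :
    ((∑ i ∈ s, g i : ℝ) : EReal) = ∑ i ∈ s, ((g i : ℝ) : EReal) :=
  map_sum (⟨⟨Real.toEReal, EReal.coe_zero⟩, EReal.coe_add⟩ : ℝ →+ EReal) g s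

lemma measurable_ereal_add : Measurable fun p : EReal × EReal => p.1 + p.2 := by
  have hrw : (fun p : EReal × EReal => p.1 + p.2) = fun p =>
      if p.1 = ⊥ ∨ p.2 = ⊥ then (⊥ : EReal)
      else if p.1 = ⊤ ∨ p.2 = ⊤ then (⊤ : EReal)
      else (((p.1.toReal + p.2.toReal : ℝ) : EReal)) := by
    funext p
    obtain ⟨x, y⟩ := p
    induction x using EReal.rec <;> induction y using EReal.rec <;>
      simp [EReal.bot_add, EReal.add_bot, EReal.top_add_coe, EReal.coe_add_top,
        EReal.top_add_top, ← EReal.coe_add]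
  rw [hrw]
  have h1 : MeasurableSet {p : EReal × EReal | p.1 = ⊥ ∨ p.2 = ⊥} := by
    rw [Set.setOf_or]
    exact (measurable_fst (measurableSet_singleton _)).union
      (measurable_snd (measurableSet_singleton _))
  have h2 : MeasurableSet {p : EReal × EReal | p.1 = ⊤ ∨ p.2 = ⊤} := by
    rw [Set.setOf_or]
    exact (measurable_fst (measurableSet_singleton _)).union
      (measurable_snd (measurableSet_singleton _))
  refine Measurable.ite h1 measurable_const (Measurable.ite h2 measurable_const ?_)
  exact (measurable_fst.ereal_toReal.add measurable_snd.ereal_toReal).coe_real_ereal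

instance : MeasurableAdd₂ EReal := ⟨measurable_ereal_add⟩

lemma ereal_upSet (S : Set EReal) (hS : ∀ ⦃x y : EReal⦄, x ∈ S → x ≤ y → y ∈ S) :
    S = Set.Ici (sInf S) ∨ S = Set.Ioi (sInf S) := by
  by_cases h : sInf S ∈ S
  · left
    refine Subset.antisymm (fun x hx => sInf_le hx) (fun x hx => hS h hx)
  · right
    refine Subset.antisymm (fun x hx => ?_) (fun x hx => ?_)
    · exact lt_of_le_of_ne (sInf_le hx) (fun e => h (by rw [e]; exact hx))
    · obtain ⟨s, hs, hsx⟩ := sInf_lt_iff.1 (Set.mem_Ioi.1 hx)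
      exact hS hs hsx.le

lemma ereal_dom_Ioi {ν ρ : Measure EReal} (h : ∀ t, ν (Set.Ici t) ≤ ρ (Set.Ici t)) (t : EReal) :
    ν (Set.Ioi t) ≤ ρ (Set.Ioi t) := by
  rcases eq_or_lt_of_le (le_top : t ≤ ⊤) with rfl | ht
  · simp
  · obtain ⟨u, hu_anti, hu_mem, hu_tend⟩ := exists_seq_strictAnti_tendsto' ht
    have hseq : Set.Ioi t = ⋃ n, Set.Ici (u n) := by
      ext x
      constructor
      · intro hx
        obtain ⟨n, hn⟩ := ((tendsto_order.1 hu_tend).2 x hx).exists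
        exact Set.mem_iUnion.2 ⟨n, hn.le⟩
      · intro hx
        obtain ⟨n, hn⟩ := Set.mem_iUnion.1 hx
        exact lt_of_lt_of_le (hu_mem n).1 hn
    have hdir : Directed (· ⊆ ·) fun n => Set.Ici (u n) := by
      refine Monotone.directed_le fun i j hij => Set.Ici_subset_Ici.2 (hu_anti.antitone hij)
    rw [hseq, hdir.measure_iUnion, hdir.measure_iUnion]
    exact iSup_mono fun n => h (u n)

lemma ereal_dom_upSet {ν ρ : Measure EReal} (h : ∀ t, ν (Set.Ici t) ≤ ρ (Set.Ici t))
    {S : Set EReal} (hS : ∀ ⦃x y : EReal⦄, x ∈ S → x ≤ y → y ∈ S) : ν S ≤ ρ S := by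
  rcases ereal_upSet S hS with hE | hE
  · rw [hE]; exact h _
  · rw [hE]; exact ereal_dom_Ioi h _

lemma ereal_dom_lintegral {ν ρ : Measure EReal} [IsProbabilityMeasure ν] [IsProbabilityMeasure ρ]
    (h : ∀ t, ν (Set.Ici t) ≤ ρ (Set.Ici t)) {G : EReal → ℝ≥0∞}
    (hG : Monotone G) (hG1 : ∀ x, G x ≤ 1) :
    ∫⁻ x, G x ∂ν ≤ ∫⁻ x, G x ∂ρ := by
  have hGm : Measurable G := hG.measurable
  have hne : ∀ x, G x ≠ ⊤ := fun x => ((hG1 x).trans_lt (by simp)).ne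
  have key : ∀ μ : Measure EReal,
      ∫⁻ x, G x ∂μ = ∫⁻ s in Set.Ioi (0 : ℝ), μ {x | s < (G x).toReal} ∂volume := by
    intro μ
    rw [← lintegral_eq_lintegral_meas_lt μ (ae_of_all _ fun x => ENNReal.toReal_nonneg)
        hGm.ennreal_toReal.aemeasurable]
    exact lintegral_congr fun x => (ENNReal.ofReal_toReal (hne x)).symm
  rw [key ν, key ρ]
  refine lintegral_mono fun s => ?_
  rcases le_or_gt 0 s with hs | hs
  · have hset : {x : EReal | s < (G x).toReal} = {x | ENNReal.ofReal s < G x} := by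
      ext x
      exact (ENNReal.ofReal_lt_iff_lt_toReal hs (hne x)).symm
    rw [hset]
    exact ereal_dom_upSet h fun x y hx hxy => lt_of_lt_of_le hx (hG hxy)
  · have hset : {x : EReal | s < (G x).toReal} = Set.univ :=
      Set.eq_univ_of_forall fun x => lt_of_lt_of_le hs ENNReal.toReal_nonneg
    rw [hset]
    simp

lemma pi_apply_sum {n : ℕ} (μ : Fin (n + 1) → Measure EReal) [∀ a, IsProbabilityMeasure (μ a)]
    (a0 : Fin (n + 1)) (c : EReal) :
    Measure.pi μ {x | c ≤ ∑ a, x a}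
      = ∫⁻ x, (Measure.pi fun j => μ (a0.succAbove j))
          {y : Fin n → EReal | c ≤ x + ∑ j, y j} ∂(μ a0) := by
  have hB : MeasurableSet {p : EReal × (Fin n → EReal) | c ≤ p.1 + ∑ j, p.2 j} := by
    refine measurableSet_le measurable_const ?_
    exact measurable_fst.add
      (Finset.measurable_sum _ fun j _ => (measurable_pi_apply j).comp measurable_snd)
  have hmp := measurePreserving_piFinSuccAbove μ a0
  have h1 : Measure.pi μ {x | c ≤ ∑ a, x a}
      = ((μ a0).prod (Measure.pi fun j => μ (a0.succAbove j)))
          {p : EReal × (Fin n → EReal) | c ≤ p.1 + ∑ j, p.2 j} := by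
    rw [← hmp.map_eq,
      Measure.map_apply (MeasurableEquiv.piFinSuccAbove (fun _ => EReal) a0).measurable hB]
    congr 1
    ext x
    simp only [Set.mem_preimage, Set.mem_setOf_eq, MeasurableEquiv.piFinSuccAbove_apply]
    rw [Fin.sum_univ_succAbove x a0]
    rfl
  rw [h1, Measure.prod_apply hB]
  rfl

lemma pi_step {n : ℕ} (m m' : Fin (n + 1) → Measure EReal)
    [∀ a, IsProbabilityMeasure (m a)] [∀ a, IsProbabilityMeasure (m' a)]
    (a0 : Fin (n + 1)) (hoff : ∀ a, a ≠ a0 → m a = m' a)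
    (hIci : ∀ t, m a0 (Set.Ici t) ≤ m' a0 (Set.Ici t)) (c : EReal) :
    Measure.pi m {x | c ≤ ∑ a, x a} ≤ Measure.pi m' {x | c ≤ ∑ a, x a} := by
  rw [pi_apply_sum m a0 c, pi_apply_sum m' a0 c]
  have hQ : (Measure.pi fun j => m (a0.succAbove j))
      = Measure.pi fun j => m' (a0.succAbove j) := by
    congr 1
    funext j
    exact hoff _ (Fin.succAbove_ne a0 j)
  rw [hQ]
  refine ereal_dom_lintegral hIci ?_ ?_
  · intro x x' hxx'
    refine measure_mono fun y hy => ?_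
    exact le_trans hy (add_le_add hxx' le_rfl)
  · intro x
    exact prob_le_one

lemma pi_dom {K : ℕ} (ν ρ : Fin K → Measure EReal)
    [hνi : ∀ a, IsProbabilityMeasure (ν a)] [hρi : ∀ a, IsProbabilityMeasure (ρ a)]
    (hIci : ∀ a t, ν a (Set.Ici t) ≤ ρ a (Set.Ici t)) (c : EReal) :
    Measure.pi ν {x | c ≤ ∑ a, x a} ≤ Measure.pi ρ {x | c ≤ ∑ a, x a} := by
  cases K with
  | zero =>
      by_cases hc : c ≤ (0 : EReal)
      · have hA : {x : Fin 0 → EReal | c ≤ ∑ a, x a} = Set.univ := by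
          ext x; simp [hc]
        rw [hA]; simp
      · have hA : {x : Fin 0 → EReal | c ≤ ∑ a, x a} = ∅ := by
          ext x; simp [hc]
        rw [hA]; simp
  | succ n =>
      set m : ℕ → Fin (n + 1) → Measure EReal := fun j a => if (a : ℕ) < j then ρ a else ν a
        with hm
      have hprob : ∀ j a, IsProbabilityMeasure (m j a) := by
        intro j a
        by_cases hja : (a : ℕ) < j
        · rw [hm]; simp only [hja, if_true]; infer_instance
        · rw [hm]; simp only [hja, if_false]; infer_instance
      have hstep : ∀ j, Measure.pi (m j) {x | c ≤ ∑ a, x a}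
          ≤ Measure.pi (m (j + 1)) {x | c ≤ ∑ a, x a} := by
        intro j
        haveI := hprob j
        haveI := hprob (j + 1)
        by_cases hj : j < n + 1
        · refine pi_step (m j) (m (j + 1)) ⟨j, hj⟩ ?_ ?_ c
          · intro a ha
            have hne : (a : ℕ) ≠ j := fun e => ha (Fin.ext e)
            by_cases hlt : (a : ℕ) < j
            · simp only [hm]; rw [if_pos hlt, if_pos (Nat.lt_succ_of_lt hlt)]
            · have h2 : ¬(a : ℕ) < j + 1 := fun h' =>
                hlt (lt_of_le_of_ne (Nat.lt_succ_iff.1 h') hne)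
              simp only [hm]; rw [if_neg hlt, if_neg h2]
          · intro t
            have e1 : m j ⟨j, hj⟩ = ν ⟨j, hj⟩ := by simp [hm]
            have e2 : m (j + 1) ⟨j, hj⟩ = ρ ⟨j, hj⟩ := by simp [hm]
            rw [e1, e2]
            exact hIci _ t
        · have heq : m (j + 1) = m j := by
            funext a
            have h1 : (a : ℕ) < j := lt_of_lt_of_le a.isLt (Nat.le_of_not_lt hj)
            simp [hm, h1, Nat.lt_succ_of_lt h1]
          rw [heq]
      have hmono : Monotone fun j => Measure.pi (m j) {x | c ≤ ∑ a, x a} :=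
        monotone_nat_of_le_succ hstep
      have h0 : m 0 = ν := by funext a; simp [hm]
      have hK : m (n + 1) = ρ := by funext a; simp [hm, a.isLt]
      have hfin := hmono (Nat.zero_le (n + 1))
      simpa only [h0, hK] using hfin

lemma indep_map_pi {ι : Type*} [Fintype ι] {Ω : Type*} [MeasurableSpace Ω]
    (P : Measure Ω) [IsProbabilityMeasure P] (T : ι → Ω → EReal)
    (hT : ∀ i, Measurable (T i))
    (hind : iIndepFun T P) :
    P.map (fun ω i => T i ω) = Measure.pi fun i => P.map (T i) := by
  haveI : ∀ i, IsProbabilityMeasure (P.map (T i)) :=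
    fun i => Measure.isProbabilityMeasure_map (hT i).aemeasurable
  refine (Measure.pi_eq fun s hs => ?_).symm
  rw [Measure.map_apply (measurable_pi_lambda _ hT) (MeasurableSet.univ_pi hs)]
  have hpre : (fun ω i => T i ω) ⁻¹' Set.pi Set.univ s = ⋂ i, T i ⁻¹' s i := by
    ext ω
    simp [Set.mem_pi]
  rw [hpre, hind.meas_iInter fun i => ⟨s i, hs i, rfl⟩]
  exact Finset.prod_congr rfl fun i _ => (Measure.map_apply (hT i) (hs i)).symm

lemma logGL_lsc (F : SubPsiFamily) (n : ℕ) (μ1 μ0 : ℝ) :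
    LowerSemicontinuous fun x => F.logGL n x μ1 μ0 := by
  intro x y hy
  simp only [SubPsiFamily.logGL] at hy ⊢
  rcases lt_max_iff.1 hy with hcase | hcase
  · rw [lt_iSup_iff] at hcase
    obtain ⟨z, hz⟩ := hcase
    have hc : Continuous fun x' : ℝ => ((Real.log (F.LR n x' z μ0) : ℝ) : EReal) := by
      refine continuous_coe_real_ereal.comp ?_
      simp only [SubPsiFamily.LR, Real.log_exp]
      fun_prop
    have hopen : IsOpen {x' : ℝ | y < ((Real.log (F.LR n x' z μ0) : ℝ) : EReal)} :=
      isOpen_Ioi.preimage hc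
    filter_upwards [hopen.mem_nhds hz] with x' hx'
    exact lt_of_lt_of_le hx'
      (le_trans (le_iSup (fun w : {w : ℝ // w ∈ F.M ∧ μ1 < w} =>
        ((Real.log (F.LR n x' w μ0) : ℝ) : EReal)) z) (le_max_left _ _))
  · exact Filter.Eventually.of_forall fun x' => lt_of_lt_of_le hcase (le_max_right _ _)

lemma logGL_measurable (F : SubPsiFamily) (n : ℕ) (μ1 μ0 : ℝ) :
    Measurable fun x => F.logGL n x μ1 μ0 :=
  (logGL_lsc F n μ1 μ0).measurable

lemma logGL_nonneg (F : SubPsiFamily) (n : ℕ) (x μ1 μ0 : ℝ) :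
    (0 : EReal) ≤ F.logGL n x μ1 μ0 := le_max_right _ _

end Helpers

/-- **Multi-stream combination of boundary-crossing bounds (eq. (5.2)).** -/
theorem multi_stream_crossing
    (F : SubPsiFamily) (K : ℕ) (hK : 1 ≤ K)
    {Ω : Type} [MeasurableSpace Ω] (P : Measure Ω) [IsProbabilityMeasure P]
    (X : Fin K → ℕ → Ω → ℝ) (μa μ0a μ1a : Fin K → ℝ)
    (hμa : ∀ a, μa a ∈ F.M)
    (hindep_within : ∀ a, iIndepFun (X a) P)
    (hsub : ∀ a i, F.SubPsi P (μa a) (X a i))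
    (hindep_across :
      iIndepFun (fun a (ω : Ω) (i : ℕ) => X a i ω) P)
    (f : Fin K → ℕ → ℝ) (h : Fin K → ℝ → ℝ)
    (hf_nonneg : ∀ a n, 0 ≤ f a n)
    (hh_nonneg : ∀ a, ∀ α ∈ Set.Ioc (0 : ℝ) 1, 0 ≤ h a α)
    (hh_anti : ∀ a, AntitoneOn (h a) (Set.Ioc 0 1))
    (hh_lim : ∀ a, Tendsto (h a) (nhdsWithin 0 (Set.Ioi 0)) atTop)
    (hcross : ∀ a, ∀ α ∈ Set.Ioc (0 : ℝ) 1,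
      P {ω | ∃ n : ℕ, 1 ≤ n ∧
          ((f a n + h a α : ℝ) : EReal)
            ≤ F.logGL n (sampleMean (X a) n ω) (μ1a a) (μ0a a)}
        ≤ ENNReal.ofReal α)
    (ε : ℝ) (hε : 0 < ε)
    {Ω' : Type} [MeasurableSpace Ω'] (P' : Measure Ω') [IsProbabilityMeasure P']
    (U : Fin K → Ω' → ℝ) (hUmeas : ∀ a, Measurable (U a))
    (hUindep : iIndepFun U P')
    (hUunif : ∀ a, P'.map (U a) = volume.restrict (Set.Icc (0 : ℝ) 1)) :
    P {ω | ∃ n : Fin K → ℕ, (∀ a, 1 ≤ n a) ∧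
        (((∑ a, f a (n a)) + ε : ℝ) : EReal)
          ≤ ∑ a, F.logGL (n a) (sampleMean (X a) (n a) ω) (μ1a a) (μ0a a)}
      ≤ P' {ω' | ε ≤ ∑ a, h a (U a ω')} := by
  classical
  -- the per-stream running suprema
  set Φ : Fin K → (ℕ → ℝ) → EReal := fun a v =>
    ⨆ nn : {k : ℕ // 1 ≤ k},
      (F.logGL (nn : ℕ) ((∑ i ∈ Finset.range (nn : ℕ), v i) / ((nn : ℕ) : ℝ)) (μ1a a) (μ0a a)
        + ((-(f a (nn : ℕ)) : ℝ) : EReal)) with hΦ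
  have hΦ_meas : ∀ a, Measurable (Φ a) := by
    intro a
    refine Measurable.iSup fun nn => ?_
    have hmean : Measurable fun v : ℕ → ℝ =>
        (∑ i ∈ Finset.range (nn : ℕ), v i) / ((nn : ℕ) : ℝ) :=
      (Finset.measurable_sum _ fun i _ => measurable_pi_apply i).div_const _
    exact ((logGL_measurable F (nn : ℕ) (μ1a a) (μ0a a)).comp hmean).add measurable_const
  set T : Fin K → Ω → EReal := fun a ω => Φ a fun i => X a i ω with hT
  have hX_meas : ∀ a, Measurable fun ω => (fun i => X a i ω) :=
    fun a => measurable_pi_lambda _ fun i => (hsub a i).1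
  have hT_meas : ∀ a, Measurable (T a) := fun a => (hΦ_meas a).comp (hX_meas a)
  have hT_indep : iIndepFun T P := hindep_across.comp Φ hΦ_meas
  -- the uniform-transform variables
  set H : Fin K → ℝ → EReal :=
    fun a u => if u ≤ 0 then (⊤ : EReal) else ((h a (min u 1) : ℝ) : EReal) with hH
  have hH_anti : ∀ a, Antitone (H a) := by
    intro a u v huv
    by_cases hu : u ≤ 0
    · simp only [hH, if_pos hu]
      exact le_top
    · have hv : ¬v ≤ 0 := fun hv' => hu (huv.trans hv')
      push_neg at hu hv
      simp only [hH, if_neg (not_le.2 hu), if_neg (not_le.2 hv)]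
      rw [EReal.coe_le_coe_iff]
      exact hh_anti a ⟨lt_min hu one_pos, min_le_right _ _⟩
        ⟨lt_min hv one_pos, min_le_right _ _⟩ (min_le_min huv le_rfl)
  have hH_meas : ∀ a, Measurable (H a) := fun a => (hH_anti a).measurable
  set HU : Fin K → Ω' → EReal := fun a ω' => H a (U a ω') with hHU
  have hHU_meas : ∀ a, Measurable (HU a) := fun a => (hH_meas a).comp (hUmeas a)
  have hHU_indep : iIndepFun HU P' := hUindep.comp H hH_meas
  -- marginal distributions
  set ν : Fin K → Measure EReal := fun a => P.map (T a) with hν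
  set ρm : Fin K → Measure EReal := fun a => P'.map (HU a) with hρ
  haveI hνP : ∀ a, IsProbabilityMeasure (ν a) :=
    fun a => Measure.isProbabilityMeasure_map (hT_meas a).aemeasurable
  haveI hρP : ∀ a, IsProbabilityMeasure (ρm a) :=
    fun a => Measure.isProbabilityMeasure_map (hHU_meas a).aemeasurable
  -- marginal stochastic dominance
  have hdom : ∀ a t, ν a (Set.Ici t) ≤ ρm a (Set.Ici t) := by
    intro a t
    have hνeq : ν a (Set.Ici t) = P (T a ⁻¹' Set.Ici t) := by
      simp only [hν]
      exact Measure.map_apply (hT_meas a) measurableSet_Ici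
    have hρeq : ρm a (Set.Ici t) = P' (HU a ⁻¹' Set.Ici t) := by
      simp only [hρ]
      exact Measure.map_apply (hHU_meas a) measurableSet_Ici
    set Sa : Set ℝ := {α | α ∈ Set.Ioc (0 : ℝ) 1 ∧ t ≤ ((h a α : ℝ) : EReal)} with hSa
    set αs : ℝ := sSup (insert 0 Sa) with hαs
    have hbound : ∀ x ∈ insert (0 : ℝ) Sa, x ≤ 1 := by
      intro x hx
      rcases Set.mem_insert_iff.1 hx with rfl | hxS
      · exact zero_le_one
      · exact hxS.1.2
    have hbdd : BddAbove (insert (0 : ℝ) Sa) := ⟨1, hbound⟩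
    have h0m : (0 : ℝ) ∈ insert (0 : ℝ) Sa := Set.mem_insert _ _
    have hαs0 : 0 ≤ αs := le_csSup hbdd h0m
    have hαs1 : αs ≤ 1 := csSup_le ⟨0, h0m⟩ hbound
    -- lower bound on the ρ side
    have hρge : ENNReal.ofReal αs ≤ ρm a (Set.Ici t) := by
      rw [hρeq]
      have hsub2 : U a ⁻¹' Set.Ico 0 αs ⊆ HU a ⁻¹' Set.Ici t := by
        intro ω' hω'
        obtain ⟨hu0, hu1⟩ := hω'
        by_cases hu : U a ω' ≤ 0
        · show t ≤ H a (U a ω')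
          simp only [hH, if_pos hu]
          exact le_top
        · push_neg at hu
          obtain ⟨b, hb, hub⟩ := exists_lt_of_lt_csSup ⟨0, h0m⟩ hu1
          rcases Set.mem_insert_iff.1 hb with rfl | hbS
          · exact absurd hub (not_lt.2 hu.le)
          · have humem : U a ω' ∈ Set.Ioc (0 : ℝ) 1 := ⟨hu, (hu1.le.trans hαs1)⟩
            have hha : h a b ≤ h a (U a ω') := hh_anti a humem hbS.1 hub.le
            show t ≤ H a (U a ω')
            simp only [hH, if_neg (not_le.2 hu)]
            rw [min_eq_left humem.2]
            exact le_trans hbS.2 (EReal.coe_le_coe_iff.2 hha)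
      have hIco : P' (U a ⁻¹' Set.Ico 0 αs) = ENNReal.ofReal αs := by
        rw [← Measure.map_apply (hUmeas a) measurableSet_Ico, hUunif a,
          Measure.restrict_apply measurableSet_Ico]
        have hint : Set.Ico (0 : ℝ) αs ∩ Set.Icc 0 1 = Set.Ico 0 αs := by
          refine Set.inter_eq_left.2 fun x hx => ⟨hx.1, hx.2.le.trans hαs1⟩
        rw [hint, Real.volume_Ico, sub_zero]
      rw [← hIco]
      exact measure_mono hsub2
    -- upper bound on the ν side
    have hup : ∀ β, αs < β → β ≤ 1 → P (T a ⁻¹' Set.Ici t) ≤ ENNReal.ofReal β := by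
      intro β hβ1 hβ2
      have hβpos : 0 < β := lt_of_le_of_lt hαs0 hβ1
      have hβmem : β ∈ Set.Ioc (0 : ℝ) 1 := ⟨hβpos, hβ2⟩
      have hhb : ((h a β : ℝ) : EReal) < t := by
        by_contra hcon
        push_neg at hcon
        exact absurd (le_csSup hbdd (Set.mem_insert_of_mem _ ⟨hβmem, hcon⟩)) (not_le.2 hβ1)
      refine le_trans (measure_mono ?_) (hcross a β hβmem)
      intro ω hω
      have h1 : ((h a β : ℝ) : EReal) < T a ω := lt_of_lt_of_le hhb hω
      rw [hT] at h1
      simp only at h1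
      rw [hΦ] at h1
      simp only [lt_iSup_iff] at h1
      obtain ⟨nn, hnn⟩ := h1
      refine ⟨(nn : ℕ), nn.2, ?_⟩
      set L := F.logGL (nn : ℕ) (sampleMean (X a) (nn : ℕ) ω) (μ1a a) (μ0a a) with hL
      have h2 := EReal.add_lt_add_right_coe hnn (f a (nn : ℕ))
      have h3 : (L + ((-(f a (nn : ℕ)) : ℝ) : EReal)) + ((f a (nn : ℕ) : ℝ) : EReal) = L := by
        rw [add_assoc, ← EReal.coe_add, neg_add_cancel, EReal.coe_zero, add_zero]
      have h2' : ((h a β : ℝ) : EReal) + ((f a (nn : ℕ) : ℝ) : EReal) < L := by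
        refine lt_of_lt_of_eq ?_ h3
        exact h2
      have h4 : ((f a (nn : ℕ) + h a β : ℝ) : EReal)
          = ((h a β : ℝ) : EReal) + ((f a (nn : ℕ) : ℝ) : EReal) := by
        rw [← EReal.coe_add, add_comm]
      rw [h4]
      exact h2'.le
    -- combine
    rcases lt_or_ge αs 1 with hcase | hcase
    · have hP : P (T a ⁻¹' Set.Ici t) ≤ ENNReal.ofReal αs := by
        refine ENNReal.le_of_forall_pos_le_add fun δ hδ _ => ?_
        have hδ' : (0 : ℝ) < (δ : ℝ) := by exact_mod_cast hδ
        have hβ : αs < min 1 (αs + (δ : ℝ)) := lt_min hcase (lt_add_of_pos_right _ hδ')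
        calc P (T a ⁻¹' Set.Ici t) ≤ ENNReal.ofReal (min 1 (αs + (δ : ℝ))) :=
              hup _ hβ (min_le_left _ _)
          _ ≤ ENNReal.ofReal (αs + (δ : ℝ)) := ENNReal.ofReal_le_ofReal (min_le_right _ _)
          _ = ENNReal.ofReal αs + ENNReal.ofReal (δ : ℝ) := ENNReal.ofReal_add hαs0 δ.coe_nonneg
          _ = ENNReal.ofReal αs + δ := by rw [ENNReal.ofReal_coe_nnreal]
      rw [hνeq]
      exact hP.trans hρge
    · have h1le : (1 : ℝ≥0∞) ≤ ENNReal.ofReal αs := by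
        rw [show (1 : ℝ≥0∞) = ENNReal.ofReal 1 by simp]
        exact ENNReal.ofReal_le_ofReal hcase
      calc ν a (Set.Ici t) ≤ 1 := prob_le_one
        _ ≤ ENNReal.ofReal αs := h1le
        _ ≤ ρm a (Set.Ici t) := hρge
  -- the target set in the product space
  set A : Set (Fin K → EReal) := {x | ((ε : ℝ) : EReal) ≤ ∑ a, x a} with hA
  have hA_meas : MeasurableSet A :=
    measurableSet_le measurable_const (Finset.measurable_sum _ fun a _ => measurable_pi_apply a)
  -- Step 1: the crossing event is contained in {∑ T ≥ ε}
  have hstep1 : P {ω | ∃ n : Fin K → ℕ, (∀ a, 1 ≤ n a) ∧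
        (((∑ a, f a (n a)) + ε : ℝ) : EReal)
          ≤ ∑ a, F.logGL (n a) (sampleMean (X a) (n a) ω) (μ1a a) (μ0a a)}
      ≤ P ((fun ω b => T b ω) ⁻¹' A) := by
    refine measure_mono ?_
    rintro ω ⟨n, hn1, hn2⟩
    show ((ε : ℝ) : EReal) ≤ ∑ b, T b ω
    have hterm : ∀ b, F.logGL (n b) (sampleMean (X b) (n b) ω) (μ1a b) (μ0a b)
        + ((-(f b (n b)) : ℝ) : EReal) ≤ T b ω := by
      intro b
      exact le_iSup_of_le ⟨n b, hn1 b⟩ le_rfl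
    set c : ℝ := ∑ a, f a (n a) with hc
    have hkey : ((ε : ℝ) : EReal)
        = (((c + ε : ℝ)) : EReal) + ((-c : ℝ) : EReal) := by
      rw [← EReal.coe_add]
      norm_num
    rw [hkey]
    have hmid : (((c + ε : ℝ)) : EReal) + ((-c : ℝ) : EReal)
        ≤ (∑ b, F.logGL (n b) (sampleMean (X b) (n b) ω) (μ1a b) (μ0a b))
          + ((-c : ℝ) : EReal) := add_le_add hn2 le_rfl
    refine hmid.trans ?_
    have hsplit : (∑ b, F.logGL (n b) (sampleMean (X b) (n b) ω) (μ1a b) (μ0a b))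
        + ((-c : ℝ) : EReal)
        = ∑ b, (F.logGL (n b) (sampleMean (X b) (n b) ω) (μ1a b) (μ0a b)
            + ((-(f b (n b)) : ℝ) : EReal)) := by
      rw [Finset.sum_add_distrib]
      congr 1
      rw [hc]
      rw [show (-(∑ a, f a (n a)) : ℝ) = ∑ a, -(f a (n a)) by rw [← Finset.sum_neg_distrib]]
      exact ereal_coe_sum _ _
    rw [hsplit]
    exact Finset.sum_le_sum fun b _ => hterm b
  -- Step 2: identify with the product measure and use dominance
  have hjoint_meas : Measurable fun ω b => T b ω := measurable_pi_lambda _ hT_meas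
  have hmap1 : P ((fun ω b => T b ω) ⁻¹' A) = Measure.pi ν A := by
    rw [← Measure.map_apply hjoint_meas hA_meas, indep_map_pi P T hT_meas hT_indep]
  have hpi : Measure.pi ν A ≤ Measure.pi ρm A := pi_dom ν ρm hdom _
  have hjoint_meas' : Measurable fun ω' b => HU b ω' := measurable_pi_lambda _ hHU_meas
  have hmap2 : Measure.pi ρm A = P' ((fun ω' b => HU b ω') ⁻¹' A) := by
    rw [← indep_map_pi P' HU hHU_meas hHU_indep, Measure.map_apply hjoint_meas' hA_meas]
  -- Step 3: back to the real-valued sum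
  have hstep3 : P' ((fun ω' b => HU b ω') ⁻¹' A) ≤ P' {ω' | ε ≤ ∑ a, h a (U a ω')} := by
    set N : Set Ω' := ⋃ a, U a ⁻¹' (Set.Ioc (0 : ℝ) 1)ᶜ with hN
    have hNnull : P' N = 0 := by
      refine measure_iUnion_null fun a => ?_
      rw [← Measure.map_apply (hUmeas a) measurableSet_Ioc.compl, hUunif a,
        Measure.restrict_apply measurableSet_Ioc.compl]
      have hset : (Set.Ioc (0 : ℝ) 1)ᶜ ∩ Set.Icc 0 1 = {0} := by
        ext x
        simp only [Set.mem_inter_iff, Set.mem_compl_iff, Set.mem_Ioc, Set.mem_Icc,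
          Set.mem_singleton_iff, not_and]
        constructor
        · rintro ⟨hnot, h0, h1⟩
          by_contra hne
          exact (hnot (lt_of_le_of_ne h0 (Ne.symm hne))) h1
        · rintro rfl
          exact ⟨fun hc => absurd hc (lt_irrefl 0), le_rfl, zero_le_one⟩
      rw [hset]
      exact measure_singleton 0
    have hsubset : (fun ω' b => HU b ω') ⁻¹' A
        ⊆ {ω' | ε ≤ ∑ a, h a (U a ω')} ∪ N := by
      intro ω' hω'
      by_cases hmem : ω' ∈ N
      · exact Or.inr hmem
      · left
        have hU1 : ∀ a, U a ω' ∈ Set.Ioc (0 : ℝ) 1 := by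
          intro a
          by_contra hcon
          exact hmem (Set.mem_iUnion.2 ⟨a, hcon⟩)
        have heq : ∀ a, HU a ω' = ((h a (U a ω') : ℝ) : EReal) := by
          intro a
          show H a (U a ω') = _
          simp only [hH, if_neg (not_le.2 (hU1 a).1)]
          rw [min_eq_left (hU1 a).2]
        have hsum : ((ε : ℝ) : EReal) ≤ ∑ b, HU b ω' := hω'
        rw [Finset.sum_congr rfl fun b _ => heq b, ← ereal_coe_sum] at hsum
        exact EReal.coe_le_coe_iff.1 hsum
    calc P' ((fun ω' b => HU b ω') ⁻¹' A)
        ≤ P' ({ω' | ε ≤ ∑ a, h a (U a ω')} ∪ N) := measure_mono hsubset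
      _ ≤ P' {ω' | ε ≤ ∑ a, h a (U a ω')} + P' N := measure_union_le _ _
      _ = P' {ω' | ε ≤ ∑ a, h a (U a ω')} := by rw [hNnull, add_zero]
  exact hstep1.trans (le_of_eq hmap1 |>.trans (hpi.trans ((le_of_eq hmap2).trans hstep3)))


end
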